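/- For every σ ∈ 𝔖_n, the right ideal p_σ · H𝔖_n is isomorphic, as a right H𝔖_n-module, to P_D with D = Des(σ⁻¹). -/

import Mathlib

open scoped Classical

set_option maxHeartbeats 1000000
set_option synthInstance.maxHeartbeats 400000

noncomputable section

/-- The symmetric group on `{1, …, n}`, 0-indexed as permutations of `Fin n`
(so positions/descents are indexed by `i ∈ {0, …, n-2}` instead of `{1, …, n-1}`). -/
abbrev PermN (n : ℕ) := Equiv.Perm (Fin n)

/-- The vector space `ℂ𝔖ₙ` with basis the symmetric group. -/
abbrev CS (n : ℕ) := Equiv.Perm (Fin n) →₀ ℂ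

/-- The elementary transposition `sᵢ` exchanging `i` and `i+1` (0-indexed). -/
def swapAt (n i : ℕ) (h : i + 1 < n) : PermN n :=
  Equiv.swap ⟨i, Nat.lt_of_succ_lt h⟩ ⟨i + 1, h⟩

/-- The operator `σᵢ` on `ℂ𝔖ₙ`: right multiplication by `sᵢ` (action on positions),
`μ ↦ μ sᵢ`. -/
def sigmaOp (n i : ℕ) : Module.End ℂ (CS n) :=
  if h : i + 1 < n then Finsupp.lmapDomain ℂ ℂ (fun μ => μ * swapAt n i h) else 1

/-- The elementary decreasing sorting operator `πᵢ` on `ℂ𝔖ₙ`: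
`μ ↦ μ` if `μᵢ > μᵢ₊₁` and `μ ↦ μ sᵢ` otherwise. -/
def piOp (n i : ℕ) : Module.End ℂ (CS n) :=
  if h : i + 1 < n then
    Finsupp.lmapDomain ℂ ℂ (fun μ : PermN n =>
      if μ ⟨i + 1, h⟩ < μ ⟨i, Nat.lt_of_succ_lt h⟩ then μ else μ * swapAt n i h)
  else 1

/-- The operator `σ̄ᵢ` on `ℂ𝔖ₙ`: left multiplication by `sᵢ` (action on values),
`μ ↦ sᵢ μ`. -/
def sigmaBarOp (n i : ℕ) : Module.End ℂ (CS n) :=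
  if h : i + 1 < n then Finsupp.lmapDomain ℂ ℂ (fun μ => swapAt n i h * μ) else 1

/-- The operator `σ_σ` of right multiplication by a permutation `σ`
(equal to the product of the `σᵢ` along any reduced word for `σ`). -/
def rightMulOp (n : ℕ) (σ : PermN n) : Module.End ℂ (CS n) :=
  Finsupp.lmapDomain ℂ ℂ (fun μ => μ * σ)

/-- The algebra `H𝔖ₙ`: the subalgebra of `End(ℂ𝔖ₙ)` generated by the operators
`σ₁, …, σ_{n-1}, π₁, …, π_{n-1}`.

Note on conventions: the paper composes operators left to right, `v·(fg) = (v·f)·g`,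
while multiplication in `Module.End` is `(f * g) v = f (g v)`.  Hence the paper's
product `f·g` is `g * f` here.  This does not affect the generated subalgebra. -/
def HS (n : ℕ) : Subalgebra ℂ (Module.End ℂ (CS n)) :=
  Algebra.adjoin ℂ
    ({f | ∃ i, ∃ _ : i + 1 < n, f = sigmaOp n i} ∪ {f | ∃ i, ∃ _ : i + 1 < n, f = piOp n i})

/-- The descent set `Des(μ) = {i : μᵢ > μᵢ₊₁}` (0-indexed positions). -/
def Des (n : ℕ) (μ : PermN n) : Set ℕ :=
  {i | ∃ h : i + 1 < n, μ ⟨i + 1, h⟩ < μ ⟨i, Nat.lt_of_succ_lt h⟩}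

/-- The module `P_D`: the vectors of `ℂ𝔖ₙ` that are left `i`-antisymmetric
for every `i ∉ D` (0-indexed, `i+1 < n`). -/
def PD (n : ℕ) (D : Set ℕ) : Submodule ℂ (CS n) :=
  ⨅ i : {i : ℕ // i + 1 < n ∧ i ∉ D}, LinearMap.ker (1 + sigmaBarOp n i.1)

/-- The Young subgroup `𝔖_⟨D⟩` generated by the `sᵢ` for `i ∉ D`. -/
def Young (n : ℕ) (D : Set ℕ) : Subgroup (PermN n) :=
  Subgroup.closure {g | ∃ i, ∃ h : i + 1 < n, i ∉ D ∧ g = swapAt n i h}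

/-- The vector `v_D = ∑_{ν ∈ 𝔖_⟨D⟩} (-1)^{ℓ(ν)} ν` (the sign `(-1)^{ℓ(ν)}` is the
signature of `ν`). -/
def vD (n : ℕ) (D : Set ℕ) : CS n :=
  ∑ᶠ ν ∈ (Young n D : Set (PermN n)),
    ((Equiv.Perm.sign ν : ℤ) : ℂ) • Finsupp.single ν 1

/-- The vector `v_σ := v_{Des(σ⁻¹)} · σ_σ`. -/
def vPerm (n : ℕ) (σ : PermN n) : CS n :=
  rightMulOp n σ (vD n (Des n σ⁻¹))

-- Helper instances (present in Mathlib, but provided here explicitly to avoid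
-- very deep instance searches on `Module.End ℂ (CS n)`).
noncomputable instance (priority := 10000) endSubACG (n : ℕ)
    (N : Submodule ℂ (Module.End ℂ (CS n))) : AddCommGroup ↥N :=
  @Submodule.addCommGroup ℂ (Module.End ℂ (CS n)) _ _ _ N

noncomputable instance (priority := 10000) subalgRing (n : ℕ)
    (S : Subalgebra ℂ (Module.End ℂ (CS n))) : Ring ↥S :=
  @Subalgebra.toRing ℂ (Module.End ℂ (CS n)) _ _ _ S

noncomputable instance (priority := 10000) subalgACG (n : ℕ)
    (S : Subalgebra ℂ (Module.End ℂ (CS n))) : AddCommGroup ↥S :=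
  (subalgRing n S).toAddCommGroup

noncomputable instance (priority := 10000) subalgMod (n : ℕ)
    (S : Subalgebra ℂ (Module.End ℂ (CS n))) : Module ℂ ↥S :=
  (Subalgebra.toSubmodule S).module'

/-- The right ideal `p · H𝔖ₙ` (in the paper's left-to-right convention, the set of
`p · h = h ∘ p` for `h ∈ H𝔖ₙ`), as a subspace of `End(ℂ𝔖ₙ)`. -/
def pIdeal (n : ℕ) (q : Module.End ℂ (CS n)) : Submodule ℂ (Module.End ℂ (CS n)) :=
  Submodule.map (LinearMap.mulRight ℂ q) (Subalgebra.toSubmodule (HS n))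

section Aux

variable {n : ℕ}

lemma rightMulOp_single (ρ μ : PermN n) (c : ℂ) :
    rightMulOp n ρ (Finsupp.single μ c) = Finsupp.single (μ * ρ) c := by
  simp [rightMulOp, Finsupp.lmapDomain_apply, Finsupp.mapDomain_single]

lemma rightMulOp_comp (a b : PermN n) (x : CS n) :
    rightMulOp n a (rightMulOp n b x) = rightMulOp n (b * a) x := by
  simp only [rightMulOp, Finsupp.lmapDomain_apply]
  rw [← Finsupp.mapDomain_comp]
  congr 1

lemma rightMulOp_one : rightMulOp n 1 = 1 := by
  apply Finsupp.lhom_ext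
  intro a b
  simp [rightMulOp, Finsupp.lmapDomain_apply, Finsupp.mapDomain_single]

lemma sigmaOp_eq {i : ℕ} (h : i + 1 < n) :
    sigmaOp n i = rightMulOp n (swapAt n i h) := by
  rw [sigmaOp, dif_pos h]; rfl

lemma swapAt_mem_genset {i : ℕ} (h : i + 1 < n) :
    sigmaOp n i ∈ ({f | ∃ i, ∃ _ : i + 1 < n, f = sigmaOp n i} ∪
      {f | ∃ i, ∃ _ : i + 1 < n, f = piOp n i} : Set (Module.End ℂ (CS n))) :=
  Or.inl ⟨i, h, rfl⟩

lemma rightMulOp_mem (ρ : PermN n) : rightMulOp n ρ ∈ HS n := by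
  rcases n with _ | m
  · have : ρ = 1 := Subsingleton.elim _ _
    rw [this, rightMulOp_one]; exact one_mem _
  · -- adjacent transpositions generate
    have hgen := Equiv.Perm.mclosure_swap_castSucc_succ m
    have hρ : ρ ∈ Submonoid.closure
        (Set.range fun i : Fin m ↦ Equiv.swap i.castSucc i.succ) := by
      rw [hgen]; trivial
    induction hρ using Submonoid.closure_induction with
    | one => rw [rightMulOp_one]; exact one_mem _
    | mul x y hx hy ihx ihy =>
        have : rightMulOp (m+1) (x * y) = rightMulOp (m+1) y * rightMulOp (m+1) x := by
          apply Finsupp.lhom_ext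
          intro a b
          simp only [Module.End.mul_apply, rightMulOp_single, mul_assoc]
        rw [this]; exact mul_mem ihy ihx
    | mem g hg =>
        simp only [Set.mem_range] at hg
        obtain ⟨i, rfl⟩ := hg
        have hi : (i : ℕ) + 1 < m + 1 := by omega
        have : Equiv.swap i.castSucc i.succ = swapAt (m+1) i hi := by
          unfold swapAt
          congr 1 <;> ext <;> simp [Fin.castSucc, Fin.succ]
        rw [this, ← sigmaOp_eq hi]
        exact Algebra.subset_adjoin (swapAt_mem_genset hi)

end Aux
section Aux2

variable {n : ℕ}

/-- An adjacent swap of values reverses the order of a pair only if the pair is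
exactly `(j, j+1)`. -/
lemma swapAt_flip {j : ℕ} (hj : j + 1 < n) {x y : Fin n} (hxy : x < y)
    (hflip : swapAt n j hj y < swapAt n j hj x) :
    x = ⟨j, Nat.lt_of_succ_lt hj⟩ ∧ y = ⟨j + 1, hj⟩ := by
  set a : Fin n := ⟨j, Nat.lt_of_succ_lt hj⟩ with ha
  set b : Fin n := ⟨j + 1, hj⟩ with hb
  have hab : (a : ℕ) + 1 = b := rfl
  by_cases hxa : x = a
  · by_cases hyb : y = b
    · exact ⟨hxa, hyb⟩
    · by_cases hya : y = a
      · exact absurd (hya ▸ hxa ▸ hxy) (lt_irrefl _)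
      · rw [hxa] at hflip hxy
        rw [swapAt, Equiv.swap_apply_left, Equiv.swap_apply_of_ne_of_ne hya hyb] at hflip
        exact absurd hflip (by rw [Fin.lt_def] at hxy ⊢; omega)
  · by_cases hxb : x = b
    · rw [hxb] at hflip hxy
      by_cases hya : y = a
      · exact absurd (hya ▸ hxy) (by rw [Fin.lt_def]; omega)
      · have hyb : y ≠ b := fun h => absurd (h ▸ hxy) (lt_irrefl _)
        rw [swapAt, Equiv.swap_apply_right, Equiv.swap_apply_of_ne_of_ne hya hyb] at hflip
        rw [Fin.lt_def] at hflip hxy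
        omega
    · by_cases hya : y = a
      · rw [hya] at hflip hxy
        rw [swapAt, Equiv.swap_apply_left, Equiv.swap_apply_of_ne_of_ne hxa hxb] at hflip
        rw [Fin.lt_def] at hflip hxy
        omega
      · by_cases hyb : y = b
        · rw [hyb] at hflip hxy
          rw [swapAt, Equiv.swap_apply_right, Equiv.swap_apply_of_ne_of_ne hxa hxb] at hflip
          rw [Fin.lt_def] at hflip hxy
          omega
        · rw [swapAt, Equiv.swap_apply_of_ne_of_ne hxa hxb,
            Equiv.swap_apply_of_ne_of_ne hya hyb] at hflip
          exact absurd hxy (not_lt.mpr hflip.le)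

/-- If `μ` sends positions `i, i+1` to the values `j, j+1` (in either order), then
left-multiplying by the value swap equals right-multiplying by the position swap. -/
lemma swap_conj {i j : ℕ} (hi : i + 1 < n) (hj : j + 1 < n) (μ : PermN n)
    (hcase : (μ ⟨i, Nat.lt_of_succ_lt hi⟩ = ⟨j, Nat.lt_of_succ_lt hj⟩ ∧
                μ ⟨i + 1, hi⟩ = ⟨j + 1, hj⟩) ∨
             (μ ⟨i, Nat.lt_of_succ_lt hi⟩ = ⟨j + 1, hj⟩ ∧
                μ ⟨i + 1, hi⟩ = ⟨j, Nat.lt_of_succ_lt hj⟩)) :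
    swapAt n j hj * μ = μ * swapAt n i hi := by
  have key := Equiv.swap_apply_apply μ ⟨i, Nat.lt_of_succ_lt hi⟩ ⟨i + 1, hi⟩
  have hswap : swapAt n j hj =
      Equiv.swap (μ ⟨i, Nat.lt_of_succ_lt hi⟩) (μ ⟨i + 1, hi⟩) := by
    rcases hcase with ⟨h1, h2⟩ | ⟨h1, h2⟩
    · rw [h1, h2]; rfl
    · rw [h1, h2, Equiv.swap_comm]; rfl
  rw [hswap, key, swapAt]
  group

end Aux2
section Aux3

variable {n : ℕ}

lemma sigmaBarOp_single {j : ℕ} (hj : j + 1 < n) (ρ : PermN n) (b : ℂ) :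
    sigmaBarOp n j (Finsupp.single ρ b) = Finsupp.single (swapAt n j hj * ρ) b := by
  rw [sigmaBarOp, dif_pos hj]
  simp [Finsupp.lmapDomain_apply, Finsupp.mapDomain_single]

lemma piOp_single {i : ℕ} (hi : i + 1 < n) (ρ : PermN n) (b : ℂ) :
    piOp n i (Finsupp.single ρ b) =
      Finsupp.single
        (if ρ ⟨i + 1, hi⟩ < ρ ⟨i, Nat.lt_of_succ_lt hi⟩ then ρ else ρ * swapAt n i hi) b := by
  rw [piOp, dif_pos hi]
  simp [Finsupp.lmapDomain_apply, Finsupp.mapDomain_single]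

lemma swapAt_mul_swapAt {j : ℕ} (hj : j + 1 < n) (ρ : PermN n) :
    swapAt n j hj * (swapAt n j hj * ρ) = ρ := by
  rw [← mul_assoc, swapAt, Equiv.swap_mul_self, one_mul]

/-- Kernel of `1 + σ̄ⱼ` is stable under `σᵢ`. -/
lemma ker_stab_sigma {i j : ℕ} (hj : j + 1 < n) (w : CS n)
    (hw : w + sigmaBarOp n j w = 0) :
    sigmaOp n i w + sigmaBarOp n j (sigmaOp n i w) = 0 := by
  by_cases hi : i + 1 < n
  · have hcomm : sigmaBarOp n j (sigmaOp n i w) = sigmaOp n i (sigmaBarOp n j w) := by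
      have : ∀ x : CS n, sigmaBarOp n j (sigmaOp n i x) = sigmaOp n i (sigmaBarOp n j x) := by
        have hext : (sigmaBarOp n j ∘ₗ sigmaOp n i) = (sigmaOp n i ∘ₗ sigmaBarOp n j) := by
          apply Finsupp.lhom_ext
          intro a b
          simp only [LinearMap.comp_apply, sigmaOp_eq hi, rightMulOp_single,
            sigmaBarOp_single hj, mul_assoc]
        exact fun x => congrArg (fun f => f x) hext
      exact this w
    rw [hcomm, ← map_add, hw, map_zero]
  · rw [sigmaOp, dif_neg hi]
    simpa using hw

/-- Kernel of `1 + σ̄ⱼ` is stable under `πᵢ`. -/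
lemma ker_stab_pi {i j : ℕ} (hj : j + 1 < n) (w : CS n)
    (hw : w + sigmaBarOp n j w = 0) :
    piOp n i w + sigmaBarOp n j (piOp n i w) = 0 := by
  by_cases hi : i + 1 < n
  swap
  · rw [piOp, dif_neg hi]; simpa using hw
  -- w = u - σ̄ u with u := (1/2) • w
  have hwu : w = (2⁻¹ : ℂ) • w - sigmaBarOp n j ((2⁻¹ : ℂ) • w) := by
    have hσ : sigmaBarOp n j w = -w := by linear_combination (norm := abel) hw
    rw [map_smul, hσ, smul_neg, sub_neg_eq_add, ← two_smul ℂ, smul_smul]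
    norm_num
  -- the operator identity (1 + σ̄ⱼ) ∘ πᵢ ∘ (1 - σ̄ⱼ) = 0
  have hop : ∀ b : ℂ, ∀ μ : PermN n,
      piOp n i (Finsupp.single μ b - sigmaBarOp n j (Finsupp.single μ b)) +
        sigmaBarOp n j (piOp n i (Finsupp.single μ b - sigmaBarOp n j (Finsupp.single μ b)))
        = 0 := by
    intro b μ
    have hijne : (⟨i, Nat.lt_of_succ_lt hi⟩ : Fin n) ≠ ⟨i + 1, hi⟩ := by
      simp [Fin.ext_iff]
    have hxyne : μ ⟨i + 1, hi⟩ ≠ μ ⟨i, Nat.lt_of_succ_lt hi⟩ :=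
      fun h => hijne (μ.injective h).symm
    rw [map_sub, map_sub, sigmaBarOp_single hj, piOp_single hi, piOp_single hi]
    rw [Equiv.Perm.mul_apply, Equiv.Perm.mul_apply]
    by_cases h1 : μ ⟨i + 1, hi⟩ < μ ⟨i, Nat.lt_of_succ_lt hi⟩ <;>
      by_cases h2 : swapAt n j hj (μ ⟨i + 1, hi⟩) < swapAt n j hj (μ ⟨i, Nat.lt_of_succ_lt hi⟩)
    · rw [if_pos h1, if_pos h2]
      simp only [sigmaBarOp_single hj, swapAt_mul_swapAt hj]
      abel
    · -- h1 true, h2 false: flip at values j, j+1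
      have hlt : swapAt n j hj (μ ⟨i, Nat.lt_of_succ_lt hi⟩) < swapAt n j hj (μ ⟨i + 1, hi⟩) :=
        lt_of_le_of_ne (not_lt.mp h2) (fun h => hxyne ((swapAt n j hj).injective h.symm))
      obtain ⟨hx, hy⟩ := swapAt_flip hj h1 hlt
      have hconj : swapAt n j hj * μ = μ * swapAt n i hi := swap_conj hi hj μ (Or.inr ⟨hy, hx⟩)
      have hcancel : swapAt n j hj * μ * swapAt n i hi = μ := by
        rw [hconj, mul_assoc, swapAt, Equiv.swap_mul_self, mul_one]
      rw [if_pos h1, if_neg h2, hcancel]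
      simp only [sigmaBarOp_single hj]
      abel
    · -- h1 false, h2 true
      have hyx : μ ⟨i, Nat.lt_of_succ_lt hi⟩ < μ ⟨i + 1, hi⟩ :=
        lt_of_le_of_ne (not_lt.mp h1) (Ne.symm hxyne)
      obtain ⟨hx, hy⟩ := swapAt_flip hj hyx h2
      have hconj : swapAt n j hj * μ = μ * swapAt n i hi := swap_conj hi hj μ (Or.inl ⟨hx, hy⟩)
      rw [if_neg h1, if_pos h2, ← hconj]
      simp only [sigmaBarOp_single hj, swapAt_mul_swapAt hj]
      abel
    · rw [if_neg h1, if_neg h2]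
      simp only [sigmaBarOp_single hj, mul_assoc, swapAt_mul_swapAt hj]
      abel
  -- conclude by linearity
  have hgen : ∀ x : CS n,
      piOp n i (x - sigmaBarOp n j x) +
        sigmaBarOp n j (piOp n i (x - sigmaBarOp n j x)) = 0 := by
    have hext : ((1 + sigmaBarOp n j) ∘ₗ (piOp n i ∘ₗ (1 - sigmaBarOp n j))
        : Module.End ℂ (CS n)) = 0 := by
      apply Finsupp.lhom_ext
      intro a b
      simpa [LinearMap.sub_apply, LinearMap.add_apply] using hop b a
    intro x
    have := congrArg (fun f : Module.End ℂ (CS n) => f x) hext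
    simpa [LinearMap.sub_apply, LinearMap.add_apply] using this
  have := hgen ((2⁻¹ : ℂ) • w)
  rwa [← hwu] at this

/-- `P_D` is stable under every element of `H𝔖ₙ`. -/
lemma HS_stab {D : Set ℕ} {h : Module.End ℂ (CS n)} (hh : h ∈ HS n) :
    ∀ w ∈ PD n D, h w ∈ PD n D := by
  have hmem : ∀ (w : CS n), w ∈ PD n D ↔
      ∀ i : {i : ℕ // i + 1 < n ∧ i ∉ D}, w + sigmaBarOp n i.1 w = 0 := by
    intro w
    rw [PD, Submodule.mem_iInf]
    refine forall_congr' fun i => ?_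
    rw [LinearMap.mem_ker, LinearMap.add_apply, Module.End.one_apply]
  induction hh using Algebra.adjoin_induction with
  | mem g hg =>
      intro w hw
      rw [hmem] at hw ⊢
      intro i
      rcases hg with ⟨k, hk, rfl⟩ | ⟨k, hk, rfl⟩
      · exact ker_stab_sigma i.2.1 w (hw i)
      · exact ker_stab_pi i.2.1 w (hw i)
  | algebraMap r =>
      intro w hw
      have : (algebraMap ℂ (Module.End ℂ (CS n)) r) w = r • w := rfl
      rw [this]
      exact Submodule.smul_mem _ _ hw
  | add x y hx hy ihx ihy =>
      intro w hw
      rw [LinearMap.add_apply]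
      exact Submodule.add_mem _ (ihx w hw) (ihy w hw)
  | mul x y hx hy ihx ihy =>
      intro w hw
      rw [Module.End.mul_apply]
      exact ihx _ (ihy w hw)

end Aux3
section Aux4

variable {n : ℕ}

/-- The Young subgroup as a finset. -/
def YF (n : ℕ) (D : Set ℕ) : Finset (PermN n) :=
  (Set.toFinite (Young n D : Set (PermN n))).toFinset

lemma mem_YF {D : Set ℕ} {ν : PermN n} : ν ∈ YF n D ↔ ν ∈ Young n D := by
  rw [YF, Set.Finite.mem_toFinset, SetLike.mem_coe]

lemma swapAt_mem_young {D : Set ℕ} {i : ℕ} (h : i + 1 < n) (hiD : i ∉ D) :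
    swapAt n i h ∈ Young n D :=
  Subgroup.subset_closure ⟨i, h, hiD, rfl⟩

lemma mem_PD_iff {D : Set ℕ} (w : CS n) : w ∈ PD n D ↔
    ∀ i : {i : ℕ // i + 1 < n ∧ i ∉ D}, w + sigmaBarOp n i.1 w = 0 := by
  rw [PD, Submodule.mem_iInf]
  refine forall_congr' fun i => ?_
  rw [LinearMap.mem_ker, LinearMap.add_apply, Module.End.one_apply]

lemma vD_eq (D : Set ℕ) :
    vD n D = ∑ ν ∈ YF n D, ((Equiv.Perm.sign ν : ℤ) : ℂ) • (Finsupp.single ν (1:ℂ)) := by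
  rw [vD, ← (Set.toFinite (Young n D : Set (PermN n))).coe_toFinset, finsum_mem_coe_finset]
  rfl

lemma vPerm_eq (σ : PermN n) :
    vPerm n σ = ∑ ν ∈ YF n (Des n σ⁻¹),
      ((Equiv.Perm.sign ν : ℤ) : ℂ) • (Finsupp.single (ν * σ) (1:ℂ)) := by
  rw [vPerm, vD_eq, map_sum]
  refine Finset.sum_congr rfl fun ν _ => ?_
  rw [map_smul, rightMulOp_single]

lemma sign_swapAt {i : ℕ} (h : i + 1 < n) :
    Equiv.Perm.sign (swapAt n i h) = -1 := by
  rw [swapAt, Equiv.Perm.sign_swap]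
  simp [Fin.ext_iff]

lemma vPerm_mem_PD (σ : PermN n) : vPerm n σ ∈ PD n (Des n σ⁻¹) := by
  rw [mem_PD_iff]
  rintro ⟨i, hi, hiD⟩
  set t := swapAt n i hi with ht
  have htY : t ∈ Young n (Des n σ⁻¹) := swapAt_mem_young hi hiD
  have hneg : sigmaBarOp n i (vPerm n σ) = -vPerm n σ := by
    rw [vPerm_eq, map_sum, ← Finset.sum_neg_distrib]
    refine Finset.sum_equiv (Equiv.mulLeft t) (fun ν => ?_) (fun ν hν => ?_)
    · simp only [Equiv.coe_mulLeft, mem_YF]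
      constructor
      · intro hν; exact mul_mem htY hν
      · intro hν
        have := mul_mem (inv_mem htY) hν
        rwa [inv_mul_cancel_left] at this
    · rw [map_smul, sigmaBarOp_single hi, ← ht]
      simp only [Equiv.coe_mulLeft, map_mul, sign_swapAt hi, mul_assoc, ← ht]
      simp [Units.val_mul, neg_smul, ht, sign_swapAt hi]
  rw [hneg]
  abel

lemma sigmaBarOp_apply_perm {j : ℕ} (hj : j + 1 < n) (w : CS n) :
    sigmaBarOp n j w = Finsupp.mapDomain (fun μ => swapAt n j hj * μ) w := by
  rw [sigmaBarOp, dif_pos hj, Finsupp.lmapDomain_apply]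

lemma coeff_sign {D : Set ℕ} {w : CS n} (hw : w ∈ PD n D) {ν : PermN n}
    (hν : ν ∈ Young n D) (μ : PermN n) :
    w (ν * μ) = ((Equiv.Perm.sign ν : ℤ) : ℂ) * w μ := by
  rw [mem_PD_iff] at hw
  induction hν using Subgroup.closure_induction generalizing μ with
  | mem g hg =>
      obtain ⟨i, hi, hiD, rfl⟩ := hg
      have h0 := hw ⟨i, hi, hiD⟩
      have hs : sigmaBarOp n i w = -w := by linear_combination (norm := abel) h0
      have := congrArg (fun v : CS n => v (swapAt n i hi * μ)) hs
      beta_reduce at this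
      rw [sigmaBarOp_apply_perm hi,
        Finsupp.mapDomain_apply (mul_right_injective (swapAt n i hi)) w μ] at this
      rw [sign_swapAt hi]
      rw [Finsupp.neg_apply] at this
      simp only [Units.val_neg, Units.val_one, Int.cast_neg, Int.cast_one]
      linear_combination this
  | one => simp
  | mul ν₁ ν₂ hν₁ hν₂ ih₁ ih₂ =>
      rw [mul_assoc, ih₁, ih₂, map_mul]
      push_cast
      ring
  | inv ν' hν' ih =>
      have key := ih (ν'⁻¹ * μ)
      rw [mul_inv_cancel_left] at key
      have hsq : ((Equiv.Perm.sign ν' : ℤ) : ℂ) * ((Equiv.Perm.sign ν' : ℤ) : ℂ) = 1 := by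
        have h1 : (Equiv.Perm.sign ν' : ℤ) * (Equiv.Perm.sign ν' : ℤ) = 1 := by
          rw [← Units.val_mul, Int.units_mul_self, Units.val_one]
        have h2 := congrArg (fun z : ℤ => (z : ℂ)) h1
        push_cast at h2
        exact h2
      rw [Equiv.Perm.sign_inv]
      calc w (ν'⁻¹ * μ) = ((Equiv.Perm.sign ν' : ℤ) : ℂ) *
            (((Equiv.Perm.sign ν' : ℤ) : ℂ) * w (ν'⁻¹ * μ)) := by
              rw [← mul_assoc, hsq, one_mul]
        _ = ((Equiv.Perm.sign ν' : ℤ) : ℂ) * w μ := by rw [← key]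

lemma univ_sum_single (w : CS n) :
    ∑ τ : PermN n, w τ • ((Finsupp.single τ (1:ℂ)) : CS n) = w := by
  ext a
  rw [Finsupp.finset_sum_apply]
  simp only [Finsupp.smul_apply, Finsupp.single_apply, smul_eq_mul, mul_ite, mul_one, mul_zero]
  rw [Finset.sum_ite_eq' Finset.univ a (fun τ => w τ)]
  simp

lemma recon {D : Set ℕ} {w : CS n} (hw : w ∈ PD n D) :
    ∑ τ : PermN n, w τ • rightMulOp n τ (vD n D) = ((YF n D).card : ℂ) • w := by
  have hterm : ∀ τ : PermN n, w τ • rightMulOp n τ (vD n D) =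
      ∑ ν ∈ YF n D, (w τ * ((Equiv.Perm.sign ν : ℤ) : ℂ)) • (Finsupp.single (ν * τ) (1:ℂ)) := by
    intro τ
    rw [vD_eq, map_sum, Finset.smul_sum]
    refine Finset.sum_congr rfl fun ν _ => ?_
    rw [map_smul, rightMulOp_single, smul_smul]
  calc ∑ τ : PermN n, w τ • rightMulOp n τ (vD n D)
      = ∑ τ : PermN n, ∑ ν ∈ YF n D,
          (w τ * ((Equiv.Perm.sign ν : ℤ) : ℂ)) • (Finsupp.single (ν * τ) (1:ℂ)) := by
        exact Finset.sum_congr rfl fun τ _ => hterm τ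
    _ = ∑ ν ∈ YF n D, ∑ τ : PermN n,
          (w τ * ((Equiv.Perm.sign ν : ℤ) : ℂ)) • (Finsupp.single (ν * τ) (1:ℂ)) :=
        Finset.sum_comm
    _ = ∑ ν ∈ YF n D, w := by
        refine Finset.sum_congr rfl fun ν hν => ?_
        have hνY : ν ∈ Young n D := mem_YF.mp hν
        have hsq : ((Equiv.Perm.sign ν : ℤ) : ℂ) * ((Equiv.Perm.sign ν : ℤ) : ℂ) = 1 := by
          have h1 : (Equiv.Perm.sign ν : ℤ) * (Equiv.Perm.sign ν : ℤ) = 1 := by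
            rw [← Units.val_mul, Int.units_mul_self, Units.val_one]
          have h2 := congrArg (fun z : ℤ => (z : ℂ)) h1
          push_cast at h2
          exact h2
        calc ∑ τ : PermN n, (w τ * ((Equiv.Perm.sign ν : ℤ) : ℂ)) • (Finsupp.single (ν * τ) (1:ℂ))
            = ∑ τ : PermN n, (w (ν⁻¹ * τ) * ((Equiv.Perm.sign ν : ℤ) : ℂ)) •
                (Finsupp.single τ (1:ℂ)) := by
              refine Finset.sum_equiv (Equiv.mulLeft ν) (by simp) (fun τ _ => ?_)
              simp only [Equiv.coe_mulLeft]
              rw [inv_mul_cancel_left]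
          _ = ∑ τ : PermN n, w τ • (Finsupp.single τ (1:ℂ)) := by
              refine Finset.sum_congr rfl fun τ _ => ?_
              rw [coeff_sign hw (inv_mem hνY) τ, Equiv.Perm.sign_inv, mul_comm, ← mul_assoc,
                hsq, one_mul]
          _ = w := univ_sum_single w
    _ = ((YF n D).card : ℂ) • w := by
        rw [Finset.sum_const, ← Nat.cast_smul_eq_nsmul ℂ]

lemma exists_h (σ : PermN n) {w : CS n} (hw : w ∈ PD n (Des n σ⁻¹)) :
    ∃ h ∈ HS n, h (vPerm n σ) = w := by
  set D := Des n σ⁻¹ with hD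
  have hcard : ((YF n D).card : ℂ) ≠ 0 := by
    have : (1 : PermN n) ∈ YF n D := mem_YF.mpr (one_mem _)
    have hpos : 0 < (YF n D).card := Finset.card_pos.mpr ⟨1, this⟩
    exact_mod_cast hpos.ne'
  refine ⟨(((YF n D).card : ℂ))⁻¹ • ∑ τ : PermN n, w τ • rightMulOp n (σ⁻¹ * τ), ?_, ?_⟩
  · refine Subalgebra.smul_mem _ (Subalgebra.sum_mem _ fun τ _ => ?_) _
    exact Subalgebra.smul_mem _ (rightMulOp_mem _) _
  · rw [LinearMap.smul_apply, LinearMap.sum_apply]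
    have hterm : ∀ τ : PermN n, (w τ • rightMulOp n (σ⁻¹ * τ)) (vPerm n σ) =
        w τ • rightMulOp n τ (vD n D) := by
      intro τ
      rw [LinearMap.smul_apply, vPerm, rightMulOp_comp, ← hD]
      congr 2
      group
    rw [Finset.sum_congr rfl fun τ _ => hterm τ, recon hw, smul_smul,
      inv_mul_cancel₀ hcard, one_smul]

end Aux4
section Aux5

variable {n : ℕ}

/-- The inversion set of a permutation. -/
def InvSet (ρ : PermN n) : Finset (Fin n × Fin n) :=
  Finset.univ.filter fun p => p.1 < p.2 ∧ ρ p.2 < ρ p.1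

/-- `u` and `v` lie in the same block for the complement of `D`. -/
def SB (D : Set ℕ) (u v : Fin n) : Prop :=
  ∀ j : ℕ, min u.1 v.1 ≤ j → j < max u.1 v.1 → j ∉ D

lemma SB_refl (D : Set ℕ) (u : Fin n) : SB D u u := by
  intro j h1 h2; omega

lemma SB_symm {D : Set ℕ} {u v : Fin n} (h : SB D u v) : SB D v u := by
  intro j h1 h2
  exact h j (by omega) (by omega)

lemma SB_trans {D : Set ℕ} {u v w : Fin n} (h1 : SB D u v) (h2 : SB D v w) :
    SB D u w := by
  intro j hj1 hj2
  rcases lt_or_ge j v.1 with hc | hc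
  · rcases le_or_gt u.1 j with hu | hu
    · exact h1 j (by omega) (by omega)
    · exact h2 j (by omega) (by omega)
  · rcases lt_or_ge j u.1 with hu | hu
    · exact h1 j (by omega) (by omega)
    · exact h2 j (by omega) (by omega)

lemma young_SB {D : Set ℕ} {ν : PermN n} (hν : ν ∈ Young n D) :
    ∀ a : Fin n, SB D (ν a) a := by
  induction hν using Subgroup.closure_induction with
  | mem g hg =>
      obtain ⟨i, hi, hiD, rfl⟩ := hg
      intro a
      by_cases ha : a = ⟨i, Nat.lt_of_succ_lt hi⟩
      · rw [ha, swapAt, Equiv.swap_apply_left]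
        intro j h1 h2
        simp only at h1 h2
        have : j = i := by omega
        rwa [this]
      · by_cases hb : a = ⟨i + 1, hi⟩
        · rw [hb, swapAt, Equiv.swap_apply_right]
          intro j h1 h2
          simp only at h1 h2
          have : j = i := by omega
          rwa [this]
        · rw [swapAt, Equiv.swap_apply_of_ne_of_ne ha hb]
          exact SB_refl D a
  | one => intro a; exact SB_refl D a
  | mul ν ρ hν hρ ih1 ih2 =>
      intro a
      have h1 : SB D (ν (ρ a)) (ρ a) := ih1 (ρ a)
      have h2 : SB D (ρ a) a := ih2 a
      exact SB_trans (by simpa [Equiv.Perm.mul_apply] using h1) h2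
  | inv ν hν ih =>
      intro a
      have := ih (ν⁻¹ a)
      rw [Equiv.Perm.coe_inv, Equiv.apply_symm_apply] at this
      exact SB_symm this

lemma cross_order {D : Set ℕ} {ν : PermN n} (hν : ∀ a : Fin n, SB D (ν a) a)
    {u v : Fin n} (hnb : ¬SB D u v) (huv : u < v) : ν u < ν v := by
  by_contra hle
  push_neg at hle
  apply hnb
  intro j hj1 hj2
  have h1 := hν u
  have h2 := hν v
  have huv' : u.1 < v.1 := huv
  have hle' : (ν v).1 ≤ (ν u).1 := hle
  rcases lt_or_ge j (ν u).1 with hc | hc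
  · exact h1 j (by omega) (by omega)
  · exact h2 j (by omega) (by omega)

lemma adj_mono (μ : PermN n) {u v : Fin n} (hadj : v.1 = u.1 + 1)
    (hu : u.1 ∉ Des n μ⁻¹) : μ⁻¹ u < μ⁻¹ v := by
  have hn : u.1 + 1 < n := hadj ▸ v.2
  have hnlt : ¬(μ⁻¹ ⟨u.1 + 1, hn⟩ < μ⁻¹ ⟨u.1, Nat.lt_of_succ_lt hn⟩) := by
    intro hlt
    exact hu ⟨hn, hlt⟩
  have hv : v = ⟨u.1 + 1, hn⟩ := Fin.ext hadj
  have hu2 : u = ⟨u.1, Nat.lt_of_succ_lt hn⟩ := Fin.ext rfl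
  rw [hv, hu2] at *
  have hne : μ⁻¹ (⟨u.1, Nat.lt_of_succ_lt hn⟩ : Fin n) ≠ μ⁻¹ ⟨u.1 + 1, hn⟩ := by
    intro h
    have := (Equiv.injective μ⁻¹) h
    simp [Fin.ext_iff] at this
  exact lt_of_le_of_ne (not_lt.mp hnlt) hne

lemma within_mono_aux (μ : PermN n) :
    ∀ k : ℕ, ∀ u v : Fin n, v.1 = u.1 + 1 + k → SB (Des n μ⁻¹) u v → μ⁻¹ u < μ⁻¹ v := by
  intro k
  induction k with
  | zero =>
      intro u v h hsb
      exact adj_mono μ (by omega) (hsb u.1 (by omega) (by omega))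
  | succ k ih =>
      intro u v h hsb
      have hwlt : u.1 + 1 + k < n := by have := v.2; omega
      have h1 : μ⁻¹ u < μ⁻¹ ⟨u.1 + 1 + k, hwlt⟩ := by
        refine ih u _ rfl ?_
        intro j hj1 hj2
        exact hsb j (by simp at hj1 hj2 ⊢ <;> omega) (by simp at hj1 hj2 ⊢ <;> omega)
      have h2 : μ⁻¹ (⟨u.1 + 1 + k, hwlt⟩ : Fin n) < μ⁻¹ v := by
        refine adj_mono μ (by simp; omega) ?_
        refine hsb (u.1 + 1 + k) (by simp; omega) (by simp; omega)
      exact h1.trans h2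

lemma within_mono {μ : PermN n} {u v : Fin n} (hsb : SB (Des n μ⁻¹) u v)
    (huv : u < v) : μ⁻¹ u < μ⁻¹ v := by
  have huv' : u.1 < v.1 := huv
  exact within_mono_aux μ (v.1 - u.1 - 1) u v (by omega) hsb

lemma strictMono_perm_eq_one {ν : PermN n} (h : StrictMono ν) : ν = 1 := by
  have key : ∀ m : ℕ, ∀ ρ : PermN n, StrictMono ρ → ∀ a : Fin n, a.1 = m → m ≤ (ρ a).1 := by
    intro m
    induction m with
    | zero => intro ρ hρ a ha; omega
    | succ m ih =>
        intro ρ hρ a ha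
        have hb : m < n := by have := a.2; omega
        have hba : (⟨m, hb⟩ : Fin n) < a := by
          rw [Fin.lt_def]
          show m < a.1
          omega
        have := hρ hba
        have hm := ih ρ hρ ⟨m, hb⟩ rfl
        rw [Fin.lt_def] at this
        omega
  have hinv : StrictMono (ν⁻¹ : PermN n) := by
    intro u v huv
    rcases lt_trichotomy (ν⁻¹ u) (ν⁻¹ v) with hlt | heq | hgt
    · exact hlt
    · exfalso
      have := congrArg ν heq
      simp only [Equiv.Perm.coe_inv, Equiv.apply_symm_apply] at this
      exact absurd (this ▸ huv) (lt_irrefl _)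
    · exfalso
      have := h hgt
      simp only [Equiv.Perm.coe_inv, Equiv.apply_symm_apply] at this
      exact absurd (this.trans huv) (lt_irrefl _)
  have hfix : ∀ a : Fin n, ν a = a := by
    intro a
    have h1 : a.1 ≤ (ν a).1 := key a.1 ν h a rfl
    have h2 : (ν a).1 ≤ (ν⁻¹ (ν a)).1 := key (ν a).1 ν⁻¹ hinv (ν a) rfl
    rw [Equiv.Perm.coe_inv, Equiv.symm_apply_apply] at h2
    exact Fin.ext (le_antisymm (by omega) h1)
  exact Equiv.ext hfix

lemma invSet_lt {μ ν : PermN n} (hν : ν ∈ Young n (Des n μ⁻¹)) (hne : ν ≠ 1) :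
    (InvSet μ).card < (InvSet (ν * μ)).card := by
  have hSB := young_SB hν
  have hsub : InvSet μ ⊆ InvSet (ν * μ) := by
    intro p hp
    simp only [InvSet, Finset.mem_filter, Finset.mem_univ, true_and] at hp ⊢
    obtain ⟨hlt, hinv⟩ := hp
    refine ⟨hlt, ?_⟩
    have hnb : ¬SB (Des n μ⁻¹) (μ p.2) (μ p.1) := by
      intro hsb
      have := within_mono hsb hinv
      simp only [Equiv.Perm.coe_inv, Equiv.symm_apply_apply] at this
      exact absurd hlt (not_lt.mpr this.le)
    have := cross_order hSB hnb hinv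
    simpa [Equiv.Perm.mul_apply] using this
  have hex : ∃ q : Fin n × Fin n, q.1 < q.2 ∧ ν q.2 < ν q.1 := by
    by_contra hco
    push_neg at hco
    refine hne (strictMono_perm_eq_one fun u v huv => ?_)
    have h1 := hco (u, v) huv
    exact lt_of_le_of_ne h1 fun heq => absurd (ν.injective heq) huv.ne
  obtain ⟨⟨u, v⟩, huv, hflip⟩ := hex
  have husb : SB (Des n μ⁻¹) u v := by
    by_contra hnb
    exact absurd (cross_order hSB hnb huv) (not_lt.mpr hflip.le)
  have hpos : μ⁻¹ u < μ⁻¹ v := within_mono husb huv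
  have hmem : (μ⁻¹ u, μ⁻¹ v) ∈ InvSet (ν * μ) := by
    simp only [InvSet, Finset.mem_filter, Finset.mem_univ, true_and]
    refine ⟨hpos, ?_⟩
    simp only [Equiv.Perm.mul_apply, Equiv.Perm.coe_inv, Equiv.apply_symm_apply]
    exact hflip
  have hnmem : (μ⁻¹ u, μ⁻¹ v) ∉ InvSet μ := by
    simp only [InvSet, Finset.mem_filter, Finset.mem_univ, true_and, not_and]
    intro _
    simp only [Equiv.Perm.coe_inv, Equiv.apply_symm_apply]
    exact not_lt.mpr huv.le
  exact Finset.card_lt_card ((Finset.ssubset_iff_of_subset hsub).mpr ⟨_, hmem, hnmem⟩)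

lemma single_mem_span :
    ∀ k : ℕ, ∀ μ : PermN n, n * n + 1 ≤ (InvSet μ).card + k →
      (Finsupp.single μ (1 : ℂ)) ∈ Submodule.span ℂ (Set.range (vPerm n)) := by
  intro k
  induction k with
  | zero =>
      intro μ hk
      exfalso
      have h1 : (InvSet μ).card ≤ Fintype.card (Fin n × Fin n) := Finset.card_le_univ _
      rw [Fintype.card_prod, Fintype.card_fin] at h1
      omega
  | succ k ih =>
      intro μ hk
      have hv := vPerm_eq μ
      have h1Y : (1 : PermN n) ∈ YF n (Des n μ⁻¹) := mem_YF.mpr (one_mem _)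
      rw [← Finset.add_sum_erase _ _ h1Y] at hv
      simp only [Equiv.Perm.sign_one, Units.val_one, Int.cast_one, one_smul, one_mul] at hv
      have heq : (Finsupp.single μ (1 : ℂ)) = vPerm n μ -
          ∑ ν ∈ (YF n (Des n μ⁻¹)).erase 1,
            ((Equiv.Perm.sign ν : ℤ) : ℂ) • (Finsupp.single (ν * μ) (1 : ℂ)) := by
        rw [hv]; abel
      rw [heq]
      refine Submodule.sub_mem _ (Submodule.subset_span ⟨μ, rfl⟩)
        (Submodule.sum_mem _ fun ν hν => Submodule.smul_mem _ _ ?_)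
      have hν1 : ν ≠ 1 := (Finset.mem_erase.mp hν).1
      have hνY : ν ∈ Young n (Des n μ⁻¹) := mem_YF.mp (Finset.mem_erase.mp hν).2
      refine ih (ν * μ) ?_
      have := invSet_lt hνY hν1
      omega

lemma span_vPerm (x : CS n) : x ∈ Submodule.span ℂ (Set.range (vPerm n)) := by
  have hx : x = ∑ τ : PermN n, x τ • (Finsupp.single τ (1 : ℂ)) := (univ_sum_single x).symm
  rw [hx]
  exact Submodule.sum_mem _ fun τ _ =>
    Submodule.smul_mem _ _ (single_mem_span (n * n + 1) τ (by omega))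

end Aux5

/-- For every `σ`, the right ideal `p_σ · H𝔖ₙ` is isomorphic to
`P_{Des(σ⁻¹)}` as a right `H𝔖ₙ`-module; an isomorphism of right `H𝔖ₙ`-modules is a
`ℂ`-linear isomorphism commuting with the (left-to-right) action of every `h ∈ H𝔖ₙ`. -/
theorem pIdeal_iso_PD (n : ℕ) (hn : 1 ≤ n)
    (p : PermN n → Module.End ℂ (CS n))
    (hp : ∀ σ τ : PermN n, p σ (vPerm n τ) = if τ = σ then vPerm n τ else 0)
    (σ : PermN n) :
    ∃ e : ↥(pIdeal n (p σ)) ≃ₗ[ℂ] ↥(PD n (Des n σ⁻¹)),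
      ∀ h : Module.End ℂ (CS n), h ∈ HS n →
        ∀ x y : ↥(pIdeal n (p σ)),
          (y : Module.End ℂ (CS n)) = h * (x : Module.End ℂ (CS n)) →
          (e y : CS n) = h (e x : CS n) := by
  classical
  set vσ := vPerm n σ with hvσ
  have hpσ : p σ vσ = vσ := by rw [hp σ σ, if_pos rfl]
  have himg : ∀ x : CS n, p σ x ∈ Submodule.span ℂ {vσ} := by
    intro x
    have hx := span_vPerm (n := n) x
    have hsub : Submodule.span ℂ (Set.range (vPerm n)) ≤
        Submodule.comap (p σ) (Submodule.span ℂ {vσ}) := by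
      rw [Submodule.span_le]
      rintro _ ⟨τ, rfl⟩
      simp only [SetLike.mem_coe, Submodule.mem_comap, hp σ τ]
      by_cases hτ : τ = σ
      · rw [if_pos hτ, hτ]
        exact Submodule.subset_span rfl
      · rw [if_neg hτ]
        exact Submodule.zero_mem _
    exact hsub hx
  let E0 : ↥(pIdeal n (p σ)) →ₗ[ℂ] CS n :=
    { toFun := fun f => (f : Module.End ℂ (CS n)) vσ
      map_add' := fun f g => rfl
      map_smul' := fun c f => rfl }
  have hEmem : ∀ f : ↥(pIdeal n (p σ)), E0 f ∈ PD n (Des n σ⁻¹) := by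
    rintro ⟨f, hf⟩
    obtain ⟨h, hh, rfl⟩ := hf
    show (LinearMap.mulRight ℂ (p σ) h) vσ ∈ _
    rw [LinearMap.mulRight_apply, Module.End.mul_apply, hpσ]
    exact HS_stab hh _ (vPerm_mem_PD σ)
  let E : ↥(pIdeal n (p σ)) →ₗ[ℂ] ↥(PD n (Des n σ⁻¹)) := E0.codRestrict _ hEmem
  have hker : ∀ f : ↥(pIdeal n (p σ)), E f = 0 → f = 0 := by
    rintro ⟨f, hf⟩ hker
    obtain ⟨h, hh, hfeq⟩ := hf
    have hE0 : f vσ = 0 := congrArg Subtype.val hker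
    have hhvσ : h vσ = 0 := by
      have : f vσ = h (p σ vσ) := by
        rw [← hfeq, LinearMap.mulRight_apply, Module.End.mul_apply]
      rw [this, hpσ] at hE0
      exact hE0
    have hf0 : f = 0 := by
      rw [← hfeq]
      refine LinearMap.ext fun x => ?_
      rw [LinearMap.mulRight_apply, Module.End.mul_apply]
      obtain ⟨c, hc⟩ := Submodule.mem_span_singleton.mp (himg x)
      rw [← hc, map_smul, hhvσ, smul_zero, LinearMap.zero_apply]
    exact Subtype.ext hf0
  have hinj : Function.Injective E := by
    intro a b hab
    have h0 : E (a - b) = 0 := by rw [map_sub, hab, sub_self]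
    have := hker _ h0
    rwa [sub_eq_zero] at this
  have hsurj : Function.Surjective E := by
    rintro ⟨w, hw⟩
    obtain ⟨h, hh, hhw⟩ := exists_h σ hw
    refine ⟨⟨LinearMap.mulRight ℂ (p σ) h, ⟨h, hh, rfl⟩⟩, ?_⟩
    apply Subtype.ext
    show (LinearMap.mulRight ℂ (p σ) h) vσ = w
    rw [LinearMap.mulRight_apply, Module.End.mul_apply, hpσ]
    exact hhw
  refine ⟨LinearEquiv.ofBijective E ⟨hinj, hsurj⟩, ?_⟩
  intro h hh x y hxy
  show (y : Module.End ℂ (CS n)) vσ = h ((x : Module.End ℂ (CS n)) vσ)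
  rw [hxy, Module.End.mul_apply]

end
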